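/- Canonicity of LRC: for any heterogeneous LRC-algebra F = (A, Q, ▷, ◇, ▷', ◇'), and any canonical extensions A^δ of A and Q^δ of Q, the structure F^δ = (A^δ, Q^δ, ▷^π, ◇^σ, ▷'^π, ◇'^σ), where the extended operations are defined via closed and open elements as specified, is a perfect heterogeneous LRC-algebra; in particular, all the defining axioms of heterogeneous LRC-algebras (including B3, BD1 and BD2) remain valid for the extended operations on A^δ and Q^δ, and the extended operations satisfy the infinitary versions of the join- and meet-preservation properties. -/

import Mathlib

/-! ## Heterogeneous LRC-algebras -/

/-- A heterogeneous LRC-algebra `F = (W, R, ▷, ◇, ▷', ◇')`: `W` is a Heyting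
algebra, `R` is a bounded distributive lattice with an associative product
`·` (here `mul`) preserving finite joins in each coordinate whose unit is the
top element `1 = ⊤` of `R`; `◇ : W → W` (`dia`) and `◇' : R → W` (`diaR`)
preserve finite joins; `▷ : R × W → W` (`box`) turns finite joins in its first
coordinate into meets and is monotone in its second coordinate;
`▷' : R × R → W` (`boxR`) turns finite joins in its first coordinate into
meets and preserves finite meets in its second coordinate; and the axioms
B3, BD1, BD2 hold. -/
structure LRCAlgebra (W : Type*) (R : Type*) [iW : HeytingAlgebra W]
    [iR : DistribLattice R] [iB : BoundedOrder R] where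
  mul : R → R → R
  mul_assoc : ∀ a b c, mul (mul a b) c = mul a (mul b c)
  mul_top : ∀ a, mul a ⊤ = a
  top_mul : ∀ a, mul ⊤ a = a
  mul_sup_left : ∀ a b c, mul (a ⊔ b) c = mul a c ⊔ mul b c
  mul_sup_right : ∀ a b c, mul a (b ⊔ c) = mul a b ⊔ mul a c
  mul_bot_left : ∀ a, mul ⊥ a = ⊥
  mul_bot_right : ∀ a, mul a ⊥ = ⊥
  dia : W → W
  dia_bot : dia ⊥ = ⊥
  dia_sup : ∀ a b, dia (a ⊔ b) = dia a ⊔ dia b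
  diaR : R → W
  diaR_bot : diaR ⊥ = ⊥
  diaR_sup : ∀ a b, diaR (a ⊔ b) = diaR a ⊔ diaR b
  box : R → W → W
  box_sup : ∀ α β a, box (α ⊔ β) a = box α a ⊓ box β a
  box_bot : ∀ a, box ⊥ a = ⊤
  box_mono : ∀ (α : R) {a b : W}, a ≤ b → box α a ≤ box α b
  boxR : R → R → W
  boxR_sup : ∀ α β γ, boxR (α ⊔ β) γ = boxR α γ ⊓ boxR β γ
  boxR_bot : ∀ γ, boxR ⊥ γ = ⊤
  boxR_inf : ∀ α β γ, boxR α (β ⊓ γ) = boxR α β ⊓ boxR α γ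
  boxR_top : ∀ α, boxR α ⊤ = ⊤
  b3 : ∀ α β a, box α (box β a) ≤ box (mul α β) a
  bd1 : ∀ α a, diaR α ⊓ box α a ≤ dia a
  bd2 : ∀ α β, boxR α β ≤ box α (diaR β)

/-! ## Canonical extensions of bounded distributive lattices -/

/-- A *canonical extension* of a bounded distributive lattice `L` is a
complete (distributive) lattice `Lδ` containing `L` as a bounded sublattice
(via the embedding `e`) such that (denseness) every element of `Lδ` is both a
join of closed elements (meets of elements of `L`) and a meet of open elements
(joins of elements of `L`), and (compactness) whenever `⋀ e '' S ≤ ⋁ e '' T`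
there are finite `F ⊆ S`, `G ⊆ T` with `⋀ e '' F ≤ ⋁ e '' G`. -/
structure CanonicalExtension (L : Type*) [DistribLattice L] [OrderBot L]
    [OrderTop L] (Lδ : Type*) [CompleteLattice Lδ] where
  e : L → Lδ
  inj : Function.Injective e
  map_sup : ∀ a b, e (a ⊔ b) = e a ⊔ e b
  map_inf : ∀ a b, e (a ⊓ b) = e a ⊓ e b
  map_bot : e ⊥ = ⊥
  map_top : e ⊤ = ⊤
  dense_closed : ∀ u : Lδ,
    u = sSup {k | (∃ S : Set L, k = sInf (e '' S)) ∧ k ≤ u}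
  dense_open : ∀ u : Lδ,
    u = sInf {o | (∃ S : Set L, o = sSup (e '' S)) ∧ u ≤ o}
  compact : ∀ S T : Set L, sInf (e '' S) ≤ sSup (e '' T) →
    ∃ Fs Gs : Finset L, ↑Fs ⊆ S ∧ ↑Gs ⊆ T ∧
      sInf (e '' ↑Fs) ≤ sSup (e '' ↑Gs)

namespace CanonicalExtension

variable {L : Type*} [DistribLattice L] [OrderBot L] [OrderTop L]
  {Lδ : Type*} [CompleteLattice Lδ]

/-- An element of `Lδ` is *closed* if it is a meet of elements of `L`. -/
def IsClosed (C : CanonicalExtension L Lδ) (k : Lδ) : Prop :=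
  ∃ S : Set L, k = sInf (C.e '' S)

/-- An element of `Lδ` is *open* if it is a join of elements of `L`. -/
def IsOpen (C : CanonicalExtension L Lδ) (o : Lδ) : Prop :=
  ∃ S : Set L, o = sSup (C.e '' S)

end CanonicalExtension

/-! ## The σ- and π-extensions of the operations of a heterogeneous
LRC-algebra to the canonical extensions -/

section Extensions

variable {W R : Type*} [HeytingAlgebra W] [DistribLattice R] [BoundedOrder R]
  {Wδ Rδ : Type*} [CompletelyDistribLattice Wδ] [CompletelyDistribLattice Rδ]
  (F : LRCAlgebra W R)
  (CW : CanonicalExtension W Wδ) (CR : CanonicalExtension R Rδ)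

/-- `◇^σ`: for closed `k`, `◇^σ k = ⋀{◇a : a ∈ W, k ≤ a}`, and for arbitrary
`u`, `◇^σ u = ⋁{◇^σ k : k closed, k ≤ u}`. -/
noncomputable def diaSigma (u : Wδ) : Wδ :=
  ⨆ k : {k : Wδ // CW.IsClosed k ∧ k ≤ u},
    ⨅ a : {a : W // k.1 ≤ CW.e a}, CW.e (F.dia a.1)

/-- `◇'^σ`: for closed `κ`, `◇'^σ κ = ⋀{◇'α : α ∈ R, κ ≤ α}`, and for
arbitrary `q`, `◇'^σ q = ⋁{◇'^σ κ : κ closed, κ ≤ q}`. -/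
noncomputable def diaRSigma (q : Rδ) : Wδ :=
  ⨆ κ : {κ : Rδ // CR.IsClosed κ ∧ κ ≤ q},
    ⨅ α : {α : R // κ.1 ≤ CR.e α}, CW.e (F.diaR α.1)

/-- `κ ▷^π o` for `κ ∈ K(Rδ)`, `o ∈ O(Wδ)`:
`⋁{α ▷ a : a ∈ W, a ≤ o, α ∈ R, κ ≤ α}`. -/
noncomputable def boxPiKO (κ : Rδ) (o : Wδ) : Wδ :=
  ⨆ p : {p : R × W // CW.e p.2 ≤ o ∧ κ ≤ CR.e p.1}, CW.e (F.box p.1.1 p.1.2)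

/-- `▷^π`: `q ▷^π u = ⋀{κ ▷^π o : o open, u ≤ o, κ closed, κ ≤ q}`. -/
noncomputable def boxPi (q : Rδ) (u : Wδ) : Wδ :=
  ⨅ x : {x : Rδ × Wδ // CW.IsOpen x.2 ∧ u ≤ x.2 ∧ CR.IsClosed x.1 ∧ x.1 ≤ q},
    boxPiKO F CW CR x.1.1 x.1.2

/-- `κ ▷'^π ω` for `κ ∈ K(Rδ)`, `ω ∈ O(Rδ)`:
`⋁{α ▷' β : β ∈ R, β ≤ ω, α ∈ R, κ ≤ α}`. -/
noncomputable def boxRPiKO (κ ω : Rδ) : Wδ :=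
  ⨆ p : {p : R × R // CR.e p.2 ≤ ω ∧ κ ≤ CR.e p.1}, CW.e (F.boxR p.1.1 p.1.2)

/-- `▷'^π`: `q ▷'^π w = ⋀{κ ▷'^π ω : ω open, w ≤ ω, κ closed, κ ≤ q}`. -/
noncomputable def boxRPi (q w : Rδ) : Wδ :=
  ⨅ x : {x : Rδ × Rδ // CR.IsOpen x.2 ∧ w ≤ x.2 ∧ CR.IsClosed x.1 ∧ x.1 ≤ q},
    boxRPiKO F CW CR x.1.1 x.1.2

/-- `κ₁ ·^σ κ₂` for closed `κ₁, κ₂`: `⋀{α·β : α, β ∈ R, κ₁ ≤ α, κ₂ ≤ β}`. -/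
noncomputable def mulSigmaKK (κ₁ κ₂ : Rδ) : Rδ :=
  ⨅ p : {p : R × R // κ₁ ≤ CR.e p.1 ∧ κ₂ ≤ CR.e p.2}, CR.e (F.mul p.1.1 p.1.2)

/-- `·^σ`: `q₁ ·^σ q₂ = ⋁{κ₁ ·^σ κ₂ : κ₁, κ₂ closed, κ₁ ≤ q₁, κ₂ ≤ q₂}`. -/
noncomputable def mulSigma (q₁ q₂ : Rδ) : Rδ :=
  ⨆ p : {p : Rδ × Rδ // CR.IsClosed p.1 ∧ CR.IsClosed p.2 ∧
      p.1 ≤ q₁ ∧ p.2 ≤ q₂}, mulSigmaKK F CR p.1.1 p.1.2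

end Extensions

/-! ## Perfect lattices -/

/-- An element `j` of a complete lattice is completely join-irreducible if
whenever `j = ⋁ S` then `j ∈ S`. -/
def CJIrred {L : Type*} [CompleteLattice L] (j : L) : Prop :=
  ∀ S : Set L, j = sSup S → j ∈ S

/-- A complete lattice is completely join-generated by its completely
join-irreducible elements. -/
def JoinGeneratedByCJIrred (L : Type*) [CompleteLattice L] : Prop :=
  ∀ u : L, u = sSup {j | CJIrred j ∧ j ≤ u}


/-! ### Basic facts about canonical extensions -/

namespace CanonicalExtension

variable {L : Type*} [DistribLattice L] [OrderBot L] [OrderTop L]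
  {Lδ : Type*} [CompleteLattice Lδ] (C : CanonicalExtension L Lδ)

theorem e_mono {a b : L} (h : a ≤ b) : C.e a ≤ C.e b := by
  have h2 : C.e (a ⊔ b) = C.e a ⊔ C.e b := C.map_sup a b
  rw [sup_eq_right.2 h] at h2
  rw [h2]; exact le_sup_left

theorem e_le_e {a b : L} : C.e a ≤ C.e b ↔ a ≤ b := by
  refine ⟨fun h => ?_, fun h => C.e_mono h⟩
  have h2 : C.e (a ⊓ b) = C.e a := by rw [C.map_inf]; exact inf_eq_left.2 h
  exact inf_eq_left.1 (C.inj h2)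

/-- The filter of elements whose image lies above `k`. -/
def Fset (k : Lδ) : Set L := {a | k ≤ C.e a}

/-- The ideal of elements whose image lies below `o`. -/
def Iset (o : Lδ) : Set L := {a | C.e a ≤ o}

theorem mem_Fset {k : Lδ} {a : L} : a ∈ C.Fset k ↔ k ≤ C.e a := Iff.rfl
theorem mem_Iset {o : Lδ} {a : L} : a ∈ C.Iset o ↔ C.e a ≤ o := Iff.rfl

theorem top_mem_Fset (k : Lδ) : ⊤ ∈ C.Fset k := by
  simp only [mem_Fset, C.map_top]; exact le_top

theorem inf_mem_Fset {k : Lδ} {a b : L} (ha : a ∈ C.Fset k) (hb : b ∈ C.Fset k) :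
    a ⊓ b ∈ C.Fset k := by
  simp only [mem_Fset, C.map_inf] at *; exact le_inf ha hb

theorem up_mem_Fset {k : Lδ} {a b : L} (ha : a ∈ C.Fset k) (h : a ≤ b) : b ∈ C.Fset k :=
  le_trans ha (C.e_mono h)

theorem bot_mem_Iset (o : Lδ) : ⊥ ∈ C.Iset o := by
  simp only [mem_Iset, C.map_bot]; exact bot_le

theorem sup_mem_Iset {o : Lδ} {a b : L} (ha : a ∈ C.Iset o) (hb : b ∈ C.Iset o) :
    a ⊔ b ∈ C.Iset o := by
  simp only [mem_Iset, C.map_sup] at *; exact sup_le ha hb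

theorem down_mem_Iset {o : Lδ} {a b : L} (ha : a ∈ C.Iset o) (h : b ≤ a) : b ∈ C.Iset o :=
  le_trans (C.e_mono h) ha

theorem e_finset_inf (s : Finset L) : C.e (s.inf id) = sInf (C.e '' ↑s) := by
  induction s using Finset.cons_induction with
  | empty => simp [C.map_top]
  | cons a s ha ih =>
      simp only [Finset.inf_cons, Finset.coe_cons, Set.image_insert_eq, sInf_insert, C.map_inf,
        ih, id]

theorem e_finset_sup (s : Finset L) : C.e (s.sup id) = sSup (C.e '' ↑s) := by
  induction s using Finset.cons_induction with
  | empty => simp [C.map_bot]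
  | cons a s ha ih =>
      simp only [Finset.sup_cons, Finset.coe_cons, Set.image_insert_eq, sSup_insert, C.map_sup,
        ih, id]

theorem isClosed_sInf (Z : Set L) : C.IsClosed (sInf (C.e '' Z)) := ⟨Z, rfl⟩
theorem isOpen_sSup (Z : Set L) : C.IsOpen (sSup (C.e '' Z)) := ⟨Z, rfl⟩

theorem isClosed_e (a : L) : C.IsClosed (C.e a) := ⟨{a}, by simp⟩
theorem isOpen_e (a : L) : C.IsOpen (C.e a) := ⟨{a}, by simp⟩

theorem isClosed_top : C.IsClosed (⊤ : Lδ) := ⟨∅, by simp⟩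

theorem closed_eq {k : Lδ} (hk : C.IsClosed k) : k = sInf (C.e '' C.Fset k) := by
  obtain ⟨S, rfl⟩ := hk
  refine le_antisymm (le_sInf ?_) (sInf_le_sInf (Set.image_mono fun a ha => sInf_le ⟨a, ha, rfl⟩))
  rintro x ⟨a, ha, rfl⟩
  exact ha

theorem open_eq {o : Lδ} (ho : C.IsOpen o) : o = sSup (C.e '' C.Iset o) := by
  obtain ⟨S, rfl⟩ := ho
  refine le_antisymm (sSup_le_sSup (Set.image_mono fun a ha => le_sSup ⟨a, ha, rfl⟩)) (sSup_le ?_)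
  rintro x ⟨a, ha, rfl⟩
  exact ha

theorem sInf_le_open {G : Set L} {o : Lδ} (ho : C.IsOpen o) (h : sInf (C.e '' G) ≤ o) :
    ∃ s : Finset L, ↑s ⊆ G ∧ s.inf id ∈ C.Iset o := by
  obtain ⟨T, rfl⟩ := ho
  obtain ⟨Fs, Gs, hFs, hGs, hle⟩ := C.compact G T h
  refine ⟨Fs, hFs, ?_⟩
  show C.e (Fs.inf id) ≤ _
  rw [C.e_finset_inf]
  exact hle.trans (sSup_le_sSup (Set.image_mono hGs))

theorem closed_le_sSup {k : Lδ} (hk : C.IsClosed k) {Z : Set L} (h : k ≤ sSup (C.e '' Z)) :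
    ∃ s : Finset L, ↑s ⊆ Z ∧ s.sup id ∈ C.Fset k := by
  obtain ⟨Fs, Gs, hFs, hGs, hle⟩ := C.compact (C.Fset k) Z (by rw [← C.closed_eq hk]; exact h)
  refine ⟨Gs, hGs, ?_⟩
  show k ≤ C.e (Gs.sup id)
  rw [C.e_finset_sup]
  exact (le_sInf (by rintro x ⟨a, ha, rfl⟩; exact hFs ha)).trans hle

theorem compact_sep {k o : Lδ} (hk : C.IsClosed k) (ho : C.IsOpen o) (h : k ≤ o) :
    ∃ a, k ≤ C.e a ∧ C.e a ≤ o := by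
  obtain ⟨s, hs, hmem⟩ := C.sInf_le_open ho (by rw [← C.closed_eq hk]; exact h)
  refine ⟨s.inf id, ?_, hmem⟩
  rw [C.e_finset_inf]
  exact le_sInf (by rintro x ⟨a, ha, rfl⟩; exact hs ha)

theorem le_of_forall_closed {u v : Lδ} (h : ∀ k, C.IsClosed k → k ≤ u → k ≤ v) : u ≤ v := by
  conv_lhs => rw [C.dense_closed u]
  exact sSup_le fun k hk => h k hk.1 hk.2

theorem le_of_forall_open {u v : Lδ} (h : ∀ o, C.IsOpen o → v ≤ o → u ≤ o) : u ≤ v := by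
  conv_rhs => rw [C.dense_open v]
  exact le_sInf fun o ho => h o ho.1 ho.2

end CanonicalExtension

/-! ### Prime filters and join-irreducible generation -/

section Primes

variable {L : Type*} [DistribLattice L] [OrderBot L] [OrderTop L]

/-- A prime filter of a bounded distributive lattice. -/
def IsPF (P : Set L) : Prop :=
  ⊤ ∈ P ∧ ⊥ ∉ P ∧ (∀ a ∈ P, ∀ b, a ≤ b → b ∈ P) ∧ (∀ a ∈ P, ∀ b ∈ P, a ⊓ b ∈ P) ∧
    ∀ a b, a ⊔ b ∈ P → a ∈ P ∨ b ∈ P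

/-- The prime filter separation theorem for distributive lattices. -/
theorem exists_isPF {F I : Set L} (hFtop : ⊤ ∈ F)
    (hFinf : ∀ a ∈ F, ∀ b ∈ F, a ⊓ b ∈ F)
    (hIbot : ⊥ ∈ I) (hIdown : ∀ a ∈ I, ∀ b, b ≤ a → b ∈ I)
    (hIsup : ∀ a ∈ I, ∀ b ∈ I, a ⊔ b ∈ I)
    (hdisj : ∀ a ∈ F, a ∉ I) :
    ∃ P, IsPF P ∧ F ⊆ P ∧ ∀ a ∈ P, a ∉ I := by
  set S : Set (Set L) :=
    {J | (⊥ ∈ J ∧ (∀ a ∈ J, ∀ b, b ≤ a → b ∈ J) ∧ ∀ a ∈ J, ∀ b ∈ J, a ⊔ b ∈ J) ∧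
      I ⊆ J ∧ ∀ a ∈ J, a ∉ F} with hS
  have hIS : I ∈ S := ⟨⟨hIbot, hIdown, hIsup⟩, subset_rfl, fun a ha hf => hdisj a hf ha⟩
  have hub : ∀ c ⊆ S, IsChain (· ⊆ ·) c → c.Nonempty → ∃ ub ∈ S, ∀ s ∈ c, s ⊆ ub := by
    rintro c hcS hchain ⟨J₀, hJ₀⟩
    refine ⟨⋃₀ c, ⟨⟨Set.mem_sUnion.2 ⟨J₀, hJ₀, (hcS hJ₀).1.1⟩, ?_, ?_⟩, ?_, ?_⟩,
      fun J hJ => Set.subset_sUnion_of_mem hJ⟩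
    · rintro a ⟨J, hJ, haJ⟩ b hba
      exact ⟨J, hJ, (hcS hJ).1.2.1 a haJ b hba⟩
    · rintro a ⟨J₁, hJ₁, haJ⟩ b ⟨J₂, hJ₂, hbJ⟩
      rcases hchain.total hJ₁ hJ₂ with h | h
      · exact ⟨J₂, hJ₂, (hcS hJ₂).1.2.2 a (h haJ) b hbJ⟩
      · exact ⟨J₁, hJ₁, (hcS hJ₁).1.2.2 a haJ b (h hbJ)⟩
    · exact ((hcS hJ₀).2.1).trans (Set.subset_sUnion_of_mem hJ₀)
    · rintro a ⟨J, hJ, haJ⟩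
      exact (hcS hJ).2.2 a haJ
  obtain ⟨M, hIM, hmax⟩ := zorn_subset_nonempty S hub I hIS
  obtain ⟨hMS, hMmax⟩ : M ∈ S ∧ ∀ J ∈ S, M ⊆ J → J ⊆ M :=
    ⟨hmax.1, fun J hJ hMJ => hmax.2 hJ hMJ⟩
  obtain ⟨⟨hMbot, hMdown, hMsup⟩, hIM', hMF⟩ := hMS
  -- key step: for x ∉ M there are f ∈ F, m ∈ M with f ≤ m ⊔ x
  have key : ∀ x, x ∉ M → ∃ f ∈ F, ∃ m ∈ M, f ≤ m ⊔ x := by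
    intro x hx
    by_contra hcon
    push_neg at hcon
    have hM'S : {y | ∃ m ∈ M, y ≤ m ⊔ x} ∈ S := by
      refine ⟨⟨⟨⊥, hMbot, bot_le⟩, ?_, ?_⟩, ?_, ?_⟩
      · rintro a ⟨m, hm, ham⟩ b hba
        exact ⟨m, hm, hba.trans ham⟩
      · rintro a ⟨m₁, hm₁, ha⟩ b ⟨m₂, hm₂, hb⟩
        exact ⟨m₁ ⊔ m₂, hMsup m₁ hm₁ m₂ hm₂,
          sup_le (ha.trans (sup_le_sup_right le_sup_left x))
            (hb.trans (sup_le_sup_right le_sup_right x))⟩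
      · exact fun a ha => ⟨a, hIM' ha, le_sup_left⟩
      · rintro a ⟨m, hm, ham⟩ haF
        exact hcon a haF m hm ham
    have hsub : M ⊆ {y | ∃ m ∈ M, y ≤ m ⊔ x} := fun m hm => ⟨m, hm, le_sup_left⟩
    exact hx (hMmax _ hM'S hsub ⟨⊥, hMbot, le_sup_right⟩)
  refine ⟨Mᶜ, ⟨?_, ?_, ?_, ?_, ?_⟩, ?_, ?_⟩
  · exact fun h => hMF ⊤ h hFtop
  · simpa using hMbot
  · intro a ha b hab hbM
    exact ha (hMdown b hbM a hab)
  · -- meet-closure of the complement, via maximality and distributivity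
    intro a ha b hb
    intro habM
    obtain ⟨f₁, hf₁F, m₁, hm₁, hf₁⟩ := key a ha
    obtain ⟨f₂, hf₂F, m₂, hm₂, hf₂⟩ := key b hb
    have hfF : f₁ ⊓ f₂ ∈ F := hFinf f₁ hf₁F f₂ hf₂F
    have hle : f₁ ⊓ f₂ ≤ (m₁ ⊔ m₂) ⊔ (a ⊓ b) := by
      have h1 : f₁ ⊓ f₂ ≤ (m₁ ⊔ a) ⊓ (m₂ ⊔ b) := inf_le_inf hf₁ hf₂
      refine h1.trans ?_
      rw [inf_sup_right, inf_sup_left, inf_sup_left]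
      refine sup_le (sup_le ?_ ?_) (sup_le ?_ ?_)
      · exact inf_le_left.trans (le_sup_left.trans le_sup_left)
      · exact inf_le_left.trans (le_sup_left.trans le_sup_left)
      · exact inf_le_right.trans (le_sup_right.trans le_sup_left)
      · exact le_sup_right
    have hmem : (m₁ ⊔ m₂) ⊔ (a ⊓ b) ∈ M := hMsup _ (hMsup m₁ hm₁ m₂ hm₂) _ habM
    exact hMF _ (hMdown _ hmem _ hle) hfF
  · intro a b hab
    by_contra h
    push_neg at h
    simp only [Set.mem_compl_iff, not_not] at h
    exact hab (hMsup a h.1 b h.2)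
  · intro a haF haM
    exact hMF a haM haF
  · intro a ha haI
    exact ha (hIM' haI)

end Primes

namespace CanonicalExtension

variable {L : Type*} [DistribLattice L] [OrderBot L] [OrderTop L]
  {Lδ : Type*} [CompleteLattice Lδ] (C : CanonicalExtension L Lδ)

theorem jel_le_e {P : Set L} (hP : IsPF P) {a : L} :
    sInf (C.e '' P) ≤ C.e a ↔ a ∈ P := by
  constructor
  · intro h
    obtain ⟨s, hs, hmem⟩ := C.sInf_le_open (C.isOpen_e a) h
    have hsP : s.inf id ∈ P := by
      refine Finset.inf_induction hP.1 (fun x hx y hy => hP.2.2.2.1 x hx y hy) ?_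
      exact fun i hi => hs hi
    have : s.inf id ≤ a := (C.e_le_e).1 hmem
    exact hP.2.2.1 _ hsP a this
  · intro h
    exact sInf_le ⟨a, h, rfl⟩

theorem jel_le_sSup {P : Set L} (hP : IsPF P) {Z : Set L}
    (h : sInf (C.e '' P) ≤ sSup (C.e '' Z)) : ∃ z ∈ Z, z ∈ P := by
  obtain ⟨s, hs, hmem⟩ := C.closed_le_sSup (C.isClosed_sInf P) h
  have hsup : s.sup id ∈ P := (C.jel_le_e hP).1 hmem
  have hext : ∀ t : Finset L, t.sup id ∈ P → ∃ z ∈ t, z ∈ P := by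
    intro t
    induction t using Finset.cons_induction with
    | empty => intro h; exact absurd (by simpa using h) hP.2.1
    | cons x t' hx ih =>
        intro h
        rw [Finset.sup_cons] at h
        rcases hP.2.2.2.2 _ _ h with h' | h'
        · exact ⟨x, Finset.mem_cons_self x t', h'⟩
        · obtain ⟨z, hz, hzP⟩ := ih h'
          exact ⟨z, Finset.mem_cons_of_mem hz, hzP⟩
  obtain ⟨z, hz, hzP⟩ := hext s hsup
  exact ⟨z, hs hz, hzP⟩

theorem jel_joinPrime {P : Set L} (hP : IsPF P) {S : Set Lδ}
    (h : sInf (C.e '' P) ≤ sSup S) : ∃ s ∈ S, sInf (C.e '' P) ≤ s := by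
  by_contra hcon
  push_neg at hcon
  have key : ∀ s ∈ S, ∃ Z : Set L, s ≤ sSup (C.e '' Z) ∧ ¬sInf (C.e '' P) ≤ sSup (C.e '' Z) := by
    intro s hs
    by_contra hc
    push_neg at hc
    refine absurd (C.le_of_forall_open (u := sInf (C.e '' P)) (v := s) ?_) (hcon s hs)
    rintro o ⟨Z, rfl⟩ hso
    exact hc Z hso
  choose Z hZ₁ hZ₂ using key
  have hU : sSup S ≤ sSup (C.e '' ⋃ s : S, Z s.1 s.2) := by
    refine sSup_le fun s hs => (hZ₁ s hs).trans (sSup_le_sSup (Set.image_mono ?_))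
    exact fun x hx => Set.mem_iUnion.2 ⟨⟨s, hs⟩, hx⟩
  obtain ⟨z, hzU, hzP⟩ := C.jel_le_sSup hP (h.trans hU)
  obtain ⟨⟨s, hs⟩, hz⟩ := Set.mem_iUnion.1 hzU
  exact hZ₂ s hs (((C.jel_le_e hP).2 hzP).trans (le_sSup ⟨z, hz, rfl⟩))

theorem jel_cjirred {P : Set L} (hP : IsPF P) : CJIrred (sInf (C.e '' P)) := by
  intro S hS
  obtain ⟨s, hs, hle⟩ := C.jel_joinPrime hP (le_of_eq hS)
  have : s = sInf (C.e '' P) := le_antisymm (hS ▸ le_sSup hs) hle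
  exact this ▸ hs

end CanonicalExtension

namespace CanonicalExtension
variable {L : Type*} [DistribLattice L] [OrderBot L] [OrderTop L]
  {Lδ : Type*} [CompleteLattice Lδ]

theorem joinGenerated (C : CanonicalExtension L Lδ) : JoinGeneratedByCJIrred Lδ := by
  intro u
  refine le_antisymm ?_ (sSup_le fun j hj => hj.2)
  refine C.le_of_forall_closed fun k hk hku => ?_
  refine C.le_of_forall_open fun o ho hvo => ?_
  by_contra hko
  have hdisj : ∀ a ∈ C.Fset k, a ∉ C.Iset o := fun a ha hao => hko (ha.trans hao)
  obtain ⟨P, hP, hFP, hPI⟩ := exists_isPF (C.top_mem_Fset k)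
    (fun a ha b hb => C.inf_mem_Fset ha hb) (C.bot_mem_Iset o)
    (fun a ha b hba => C.down_mem_Iset ha hba)
    (fun a ha b hb => C.sup_mem_Iset ha hb) hdisj
  have hjk : sInf (C.e '' P) ≤ k := by
    rw [C.closed_eq hk]
    exact sInf_le_sInf (Set.image_mono hFP)
  have hjmem : sInf (C.e '' P) ∈ {j : Lδ | CJIrred j ∧ j ≤ u} :=
    ⟨C.jel_cjirred hP, hjk.trans hku⟩
  have hjo : sInf (C.e '' P) ≤ o := (le_sSup hjmem).trans hvo
  rw [C.open_eq ho] at hjo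
  obtain ⟨z, hzI, hzP⟩ := C.jel_le_sSup hP hjo
  exact hPI z hzP hzI

end CanonicalExtension

/-! ### Auxiliary lemmas about the extended operations -/

section OperatorLemmas

open CanonicalExtension

variable {W R : Type*} [HeytingAlgebra W] [DistribLattice R] [BoundedOrder R]
  {Wδ Rδ : Type*} [CompletelyDistribLattice Wδ] [CompletelyDistribLattice Rδ]
  (F : LRCAlgebra W R)
  (CW : CanonicalExtension W Wδ) (CR : CanonicalExtension R Rδ)

/-! #### Monotonicity of the algebra operations -/

theorem LRCAlgebra.mul_mono {α α' β β' : R} (h1 : α ≤ α') (h2 : β ≤ β') :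
    F.mul α β ≤ F.mul α' β' := by
  have e1 : F.mul α' β = F.mul α β ⊔ F.mul α' β := by
    rw [← F.mul_sup_left, sup_eq_right.2 h1]
  have e2 : F.mul α' β' = F.mul α' β ⊔ F.mul α' β' := by
    rw [← F.mul_sup_right, sup_eq_right.2 h2]
  calc F.mul α β ≤ F.mul α' β := by rw [e1]; exact le_sup_left
    _ ≤ F.mul α' β' := by rw [e2]; exact le_sup_left

theorem LRCAlgebra.dia_mono {a b : W} (h : a ≤ b) : F.dia a ≤ F.dia b := by
  have : F.dia b = F.dia a ⊔ F.dia b := by rw [← F.dia_sup, sup_eq_right.2 h]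
  rw [this]; exact le_sup_left

theorem LRCAlgebra.diaR_mono {a b : R} (h : a ≤ b) : F.diaR a ≤ F.diaR b := by
  have : F.diaR b = F.diaR a ⊔ F.diaR b := by rw [← F.diaR_sup, sup_eq_right.2 h]
  rw [this]; exact le_sup_left

theorem LRCAlgebra.box_anti {α α' : R} (h : α ≤ α') (a : W) :
    F.box α' a ≤ F.box α a := by
  have : F.box α' a = F.box α a ⊓ F.box α' a := by rw [← F.box_sup, sup_eq_right.2 h]
  rw [this]; exact inf_le_left

theorem LRCAlgebra.boxR_anti {α α' : R} (h : α ≤ α') (γ : R) :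
    F.boxR α' γ ≤ F.boxR α γ := by
  have : F.boxR α' γ = F.boxR α γ ⊓ F.boxR α' γ := by rw [← F.boxR_sup, sup_eq_right.2 h]
  rw [this]; exact inf_le_left

theorem LRCAlgebra.boxR_mono2 (α : R) {β γ : R} (h : β ≤ γ) :
    F.boxR α β ≤ F.boxR α γ := by
  have : F.boxR α β = F.boxR α β ⊓ F.boxR α γ := by rw [← F.boxR_inf, inf_eq_left.2 h]
  rw [this]; exact inf_le_right

/-! #### Set descriptions of the extended operations -/

/-- Generating set of `κ₁ ·^σ κ₂`. -/
def mulSet (κ₁ κ₂ : Rδ) : Set R :=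
  {x | ∃ α ∈ CR.Fset κ₁, ∃ β ∈ CR.Fset κ₂, x = F.mul α β}

theorem mulSigmaKK_eq (κ₁ κ₂ : Rδ) :
    mulSigmaKK F CR κ₁ κ₂ = sInf (CR.e '' mulSet F CR κ₁ κ₂) := by
  apply le_antisymm
  · refine le_sInf ?_
    rintro x ⟨y, ⟨α, hα, β, hβ, rfl⟩, rfl⟩
    exact iInf_le (fun p : {p : R × R // κ₁ ≤ CR.e p.1 ∧ κ₂ ≤ CR.e p.2} =>
      CR.e (F.mul p.1.1 p.1.2)) ⟨(α, β), hα, hβ⟩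
  · refine le_iInf ?_
    rintro ⟨⟨α, β⟩, hα, hβ⟩
    exact sInf_le ⟨F.mul α β, ⟨α, hα, β, hβ, rfl⟩, rfl⟩

theorem isClosed_mulSigmaKK (κ₁ κ₂ : Rδ) : CR.IsClosed (mulSigmaKK F CR κ₁ κ₂) := by
  rw [mulSigmaKK_eq]; exact CR.isClosed_sInf _

/-- Generating set of `κ ▷^π o`. -/
def boxSet (κ : Rδ) (o : Wδ) : Set W :=
  {x | ∃ α, κ ≤ CR.e α ∧ ∃ a ∈ CW.Iset o, x = F.box α a}

theorem boxPiKO_eq (κ : Rδ) (o : Wδ) :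
    boxPiKO F CW CR κ o = sSup (CW.e '' boxSet F CW CR κ o) := by
  apply le_antisymm
  · refine iSup_le ?_
    rintro ⟨⟨α, a⟩, hao, hκα⟩
    exact le_sSup ⟨F.box α a, ⟨α, hκα, a, hao, rfl⟩, rfl⟩
  · refine sSup_le ?_
    rintro x ⟨y, ⟨α, hκα, a, hao, rfl⟩, rfl⟩
    exact le_iSup (fun p : {p : R × W // CW.e p.2 ≤ o ∧ κ ≤ CR.e p.1} =>
      CW.e (F.box p.1.1 p.1.2)) ⟨(α, a), hao, hκα⟩

/-- Generating set of `κ ▷'^π ω`. -/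
def boxRSet (κ ω : Rδ) : Set W :=
  {x | ∃ α, κ ≤ CR.e α ∧ ∃ β ∈ CR.Iset ω, x = F.boxR α β}

theorem boxRPiKO_eq (κ ω : Rδ) :
    boxRPiKO F CW CR κ ω = sSup (CW.e '' boxRSet F CR κ ω) := by
  apply le_antisymm
  · refine iSup_le ?_
    rintro ⟨⟨α, β⟩, hβω, hκα⟩
    exact le_sSup ⟨F.boxR α β, ⟨α, hκα, β, hβω, rfl⟩, rfl⟩
  · refine sSup_le ?_
    rintro x ⟨y, ⟨α, hκα, β, hβω, rfl⟩, rfl⟩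
    exact le_iSup (fun p : {p : R × R // CR.e p.2 ≤ ω ∧ κ ≤ CR.e p.1} =>
      CW.e (F.boxR p.1.1 p.1.2)) ⟨(α, β), hβω, hκα⟩

/-- The value of `◇^σ` at a closed element. -/
noncomputable def dK (k : Wδ) : Wδ := sInf (CW.e '' (F.dia '' CW.Fset k))

theorem diaSigma_eq (u : Wδ) :
    diaSigma F CW u = ⨆ k : {k : Wδ // CW.IsClosed k ∧ k ≤ u}, dK F CW k.1 := by
  refine iSup_congr fun k => ?_
  apply le_antisymm
  · refine le_sInf ?_
    rintro x ⟨y, ⟨a, ha, rfl⟩, rfl⟩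
    exact iInf_le (fun a : {a : W // k.1 ≤ CW.e a} => CW.e (F.dia a.1)) ⟨a, ha⟩
  · refine le_iInf ?_
    rintro ⟨a, ha⟩
    exact sInf_le ⟨F.dia a, ⟨a, ha, rfl⟩, rfl⟩

/-- The value of `◇'^σ` at a closed element. -/
noncomputable def dKR (κ : Rδ) : Wδ := sInf (CW.e '' (F.diaR '' CR.Fset κ))

theorem diaRSigma_eq (q : Rδ) :
    diaRSigma F CW CR q = ⨆ κ : {κ : Rδ // CR.IsClosed κ ∧ κ ≤ q}, dKR F CW CR κ.1 := by
  refine iSup_congr fun κ => ?_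
  apply le_antisymm
  · refine le_sInf ?_
    rintro x ⟨y, ⟨α, hα, rfl⟩, rfl⟩
    exact iInf_le (fun α : {α : R // κ.1 ≤ CR.e α} => CW.e (F.diaR α.1)) ⟨α, hα⟩
  · refine le_iInf ?_
    rintro ⟨α, hα⟩
    exact sInf_le ⟨F.diaR α, ⟨α, hα, rfl⟩, rfl⟩

/-! #### Access lemmas -/

theorem dK_le_diaSigma {k u : Wδ} (hk : CW.IsClosed k) (hku : k ≤ u) :
    dK F CW k ≤ diaSigma F CW u := by
  rw [diaSigma_eq]
  exact le_iSup_of_le ⟨k, hk, hku⟩ le_rfl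

theorem diaSigma_le {u v : Wδ} (h : ∀ k, CW.IsClosed k → k ≤ u → dK F CW k ≤ v) :
    diaSigma F CW u ≤ v := by
  rw [diaSigma_eq]
  exact iSup_le fun k => h k.1 k.2.1 k.2.2

theorem dKR_le_diaRSigma {κ q : Rδ} (hκ : CR.IsClosed κ) (hκq : κ ≤ q) :
    dKR F CW CR κ ≤ diaRSigma F CW CR q := by
  rw [diaRSigma_eq]
  exact le_iSup_of_le ⟨κ, hκ, hκq⟩ le_rfl

theorem diaRSigma_le {q : Rδ} {v : Wδ} (h : ∀ κ, CR.IsClosed κ → κ ≤ q → dKR F CW CR κ ≤ v) :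
    diaRSigma F CW CR q ≤ v := by
  rw [diaRSigma_eq]
  exact iSup_le fun κ => h κ.1 κ.2.1 κ.2.2

theorem boxPi_le_KO {q u κ o} (ho : CW.IsOpen o) (huo : u ≤ o) (hκ : CR.IsClosed κ)
    (hκq : κ ≤ q) : boxPi F CW CR q u ≤ boxPiKO F CW CR κ o :=
  iInf_le (fun x : {x : Rδ × Wδ // CW.IsOpen x.2 ∧ u ≤ x.2 ∧ CR.IsClosed x.1 ∧ x.1 ≤ q} =>
    boxPiKO F CW CR x.1.1 x.1.2) ⟨(κ, o), ho, huo, hκ, hκq⟩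

theorem le_boxPi {q u v} (h : ∀ κ o, CW.IsOpen o → u ≤ o → CR.IsClosed κ → κ ≤ q →
    v ≤ boxPiKO F CW CR κ o) : v ≤ boxPi F CW CR q u := by
  refine le_iInf ?_
  rintro ⟨⟨κ, o⟩, ho, huo, hκ, hκq⟩
  exact h κ o ho huo hκ hκq

theorem boxRPi_le_KO {q w κ ω} (hω : CR.IsOpen ω) (hwω : w ≤ ω) (hκ : CR.IsClosed κ)
    (hκq : κ ≤ q) : boxRPi F CW CR q w ≤ boxRPiKO F CW CR κ ω :=
  iInf_le (fun x : {x : Rδ × Rδ // CR.IsOpen x.2 ∧ w ≤ x.2 ∧ CR.IsClosed x.1 ∧ x.1 ≤ q} =>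
    boxRPiKO F CW CR x.1.1 x.1.2) ⟨(κ, ω), hω, hwω, hκ, hκq⟩

theorem le_boxRPi {q w v} (h : ∀ κ ω, CR.IsOpen ω → w ≤ ω → CR.IsClosed κ → κ ≤ q →
    v ≤ boxRPiKO F CW CR κ ω) : v ≤ boxRPi F CW CR q w := by
  refine le_iInf ?_
  rintro ⟨⟨κ, ω⟩, hω, hwω, hκ, hκq⟩
  exact h κ ω hω hwω hκ hκq

theorem mKK_le_mulSigma {q w κ₁ κ₂ : Rδ} (h1 : CR.IsClosed κ₁) (h2 : CR.IsClosed κ₂)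
    (hq : κ₁ ≤ q) (hw : κ₂ ≤ w) : mulSigmaKK F CR κ₁ κ₂ ≤ mulSigma F CR q w :=
  le_iSup_of_le (⟨(κ₁, κ₂), h1, h2, hq, hw⟩ :
    {p : Rδ × Rδ // CR.IsClosed p.1 ∧ CR.IsClosed p.2 ∧ p.1 ≤ q ∧ p.2 ≤ w}) le_rfl

theorem mulSigma_le {q w v : Rδ} (h : ∀ κ₁ κ₂, CR.IsClosed κ₁ → CR.IsClosed κ₂ →
    κ₁ ≤ q → κ₂ ≤ w → mulSigmaKK F CR κ₁ κ₂ ≤ v) : mulSigma F CR q w ≤ v := by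
  refine iSup_le ?_
  rintro ⟨⟨κ₁, κ₂⟩, h1, h2, hq, hw⟩
  exact h κ₁ κ₂ h1 h2 hq hw

theorem mulSigmaKK_anti {κ₁ κ₁' κ₂ κ₂' : Rδ} (h1 : κ₁ ≤ κ₁') (h2 : κ₂ ≤ κ₂') :
    mulSigmaKK F CR κ₁ κ₂ ≤ mulSigmaKK F CR κ₁' κ₂' := by
  refine le_iInf ?_
  rintro ⟨⟨α, β⟩, hα, hβ⟩
  exact iInf_le (fun p : {p : R × R // κ₁ ≤ CR.e p.1 ∧ κ₂ ≤ CR.e p.2} =>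
    CR.e (F.mul p.1.1 p.1.2)) ⟨(α, β), h1.trans hα, h2.trans hβ⟩

/-! #### Finite extraction lemmas -/

theorem exists_mul_lb {κ₁ κ₂ : Rδ} (s : Finset R) (hs : ↑s ⊆ mulSet F CR κ₁ κ₂) :
    ∃ α ∈ CR.Fset κ₁, ∃ β ∈ CR.Fset κ₂, F.mul α β ≤ s.inf id := by
  refine Finset.inf_induction (p := fun x => ∃ α ∈ CR.Fset κ₁, ∃ β ∈ CR.Fset κ₂, F.mul α β ≤ x) ?_ ?_ ?_
  · exact ⟨⊤, CR.top_mem_Fset _, ⊤, CR.top_mem_Fset _, le_top⟩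
  · rintro x ⟨α₁, hα₁, β₁, hβ₁, h1⟩ y ⟨α₂, hα₂, β₂, hβ₂, h2⟩
    refine ⟨α₁ ⊓ α₂, CR.inf_mem_Fset hα₁ hα₂, β₁ ⊓ β₂, CR.inf_mem_Fset hβ₁ hβ₂, le_inf ?_ ?_⟩
    · exact (F.mul_mono inf_le_left inf_le_left).trans h1
    · exact (F.mul_mono inf_le_right inf_le_right).trans h2
  · intro x hx
    obtain ⟨α, hα, β, hβ, rfl⟩ := hs hx
    exact ⟨α, hα, β, hβ, le_rfl⟩

theorem exists_box_ub {κ : Rδ} {o : Wδ} (s : Finset W) (hs : ↑s ⊆ boxSet F CW CR κ o) :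
    ∃ α, κ ≤ CR.e α ∧ ∃ a ∈ CW.Iset o, s.sup id ≤ F.box α a := by
  refine Finset.sup_induction (p := fun x => ∃ α, κ ≤ CR.e α ∧ ∃ a ∈ CW.Iset o, x ≤ F.box α a) ?_ ?_ ?_
  · exact ⟨⊤, by rw [CR.map_top]; exact le_top, ⊥, CW.bot_mem_Iset _, bot_le⟩
  · rintro x ⟨α₁, hα₁, a₁, ha₁, h1⟩ y ⟨α₂, hα₂, a₂, ha₂, h2⟩
    refine ⟨α₁ ⊓ α₂, by rw [CR.map_inf]; exact le_inf hα₁ hα₂, a₁ ⊔ a₂,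
      CW.sup_mem_Iset ha₁ ha₂, sup_le ?_ ?_⟩
    · exact h1.trans ((F.box_anti inf_le_left a₁).trans (F.box_mono _ le_sup_left))
    · exact h2.trans ((F.box_anti inf_le_right a₂).trans (F.box_mono _ le_sup_right))
  · intro x hx
    obtain ⟨α, hα, a, ha, rfl⟩ := hs hx
    exact ⟨α, hα, a, ha, le_rfl⟩

theorem exists_boxR_ub {κ ω : Rδ} (s : Finset W) (hs : ↑s ⊆ boxRSet F CR κ ω) :
    ∃ α, κ ≤ CR.e α ∧ ∃ β ∈ CR.Iset ω, s.sup id ≤ F.boxR α β := by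
  refine Finset.sup_induction (p := fun x => ∃ α, κ ≤ CR.e α ∧ ∃ β ∈ CR.Iset ω, x ≤ F.boxR α β) ?_ ?_ ?_
  · exact ⟨⊤, by rw [CR.map_top]; exact le_top, ⊥, CR.bot_mem_Iset _, bot_le⟩
  · rintro x ⟨α₁, hα₁, β₁, hβ₁, h1⟩ y ⟨α₂, hα₂, β₂, hβ₂, h2⟩
    refine ⟨α₁ ⊓ α₂, by rw [CR.map_inf]; exact le_inf hα₁ hα₂, β₁ ⊔ β₂,
      CR.sup_mem_Iset hβ₁ hβ₂, sup_le ?_ ?_⟩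
    · exact h1.trans ((F.boxR_anti inf_le_left β₁).trans (F.boxR_mono2 _ le_sup_left))
    · exact h2.trans ((F.boxR_anti inf_le_right β₂).trans (F.boxR_mono2 _ le_sup_right))
  · intro x hx
    obtain ⟨α, hα, β, hβ, rfl⟩ := hs hx
    exact ⟨α, hα, β, hβ, le_rfl⟩

theorem exists_dia_lb {k : Wδ} (s : Finset W) (hs : ↑s ⊆ F.dia '' CW.Fset k) :
    ∃ b ∈ CW.Fset k, F.dia b ≤ s.inf id := by
  refine Finset.inf_induction (p := fun x => ∃ b ∈ CW.Fset k, F.dia b ≤ x) ?_ ?_ ?_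
  · exact ⟨⊤, CW.top_mem_Fset _, le_top⟩
  · rintro x ⟨b₁, hb₁, h1⟩ y ⟨b₂, hb₂, h2⟩
    exact ⟨b₁ ⊓ b₂, CW.inf_mem_Fset hb₁ hb₂,
      le_inf ((F.dia_mono inf_le_left).trans h1) ((F.dia_mono inf_le_right).trans h2)⟩
  · intro x hx
    obtain ⟨b, hb, rfl⟩ := hs hx
    exact ⟨b, hb, le_rfl⟩

theorem exists_diaR_lb {κ : Rδ} (s : Finset W) (hs : ↑s ⊆ F.diaR '' CR.Fset κ) :
    ∃ β ∈ CR.Fset κ, F.diaR β ≤ s.inf id := by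
  refine Finset.inf_induction (p := fun x => ∃ β ∈ CR.Fset κ, F.diaR β ≤ x) ?_ ?_ ?_
  · exact ⟨⊤, CR.top_mem_Fset _, le_top⟩
  · rintro x ⟨b₁, hb₁, h1⟩ y ⟨b₂, hb₂, h2⟩
    exact ⟨b₁ ⊓ b₂, CR.inf_mem_Fset hb₁ hb₂,
      le_inf ((F.diaR_mono inf_le_left).trans h1) ((F.diaR_mono inf_le_right).trans h2)⟩
  · intro x hx
    obtain ⟨b, hb, rfl⟩ := hs hx
    exact ⟨b, hb, le_rfl⟩

/-! #### Preimage lemmas -/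

theorem dia_preimage {O : Wδ} {a : W}
    (h : CW.e a ≤ sSup (CW.e '' {x | F.dia x ∈ CW.Iset O})) : F.dia a ∈ CW.Iset O := by
  obtain ⟨s, hs, hmem⟩ := CW.closed_le_sSup (CW.isClosed_e a) h
  have ha : a ≤ s.sup id := CW.e_le_e.1 hmem
  have hsup : F.dia (s.sup id) ∈ CW.Iset O := by
    refine Finset.sup_induction (p := fun x => F.dia x ∈ CW.Iset O) ?_ ?_ ?_
    · show F.dia ⊥ ∈ CW.Iset O
      rw [F.dia_bot]; exact CW.bot_mem_Iset _
    · intro x hx y hy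
      show F.dia (x ⊔ y) ∈ CW.Iset O
      rw [F.dia_sup]; exact CW.sup_mem_Iset hx hy
    · exact fun i hi => hs hi
  exact CW.down_mem_Iset hsup (F.dia_mono ha)

theorem diaR_preimage {o : Wδ} {β : R}
    (h : CR.e β ≤ sSup (CR.e '' {x | F.diaR x ∈ CW.Iset o})) : F.diaR β ∈ CW.Iset o := by
  obtain ⟨s, hs, hmem⟩ := CR.closed_le_sSup (CR.isClosed_e β) h
  have hβ : β ≤ s.sup id := CR.e_le_e.1 hmem
  have hsup : F.diaR (s.sup id) ∈ CW.Iset o := by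
    refine Finset.sup_induction (p := fun x => F.diaR x ∈ CW.Iset o) ?_ ?_ ?_
    · show F.diaR ⊥ ∈ CW.Iset o
      rw [F.diaR_bot]; exact CW.bot_mem_Iset _
    · intro x hx y hy
      show F.diaR (x ⊔ y) ∈ CW.Iset o
      rw [F.diaR_sup]; exact CW.sup_mem_Iset hx hy
    · exact fun i hi => hs hi
  exact CW.down_mem_Iset hsup (F.diaR_mono hβ)

theorem mul_preimage_left {O : Rδ} {κ₂ : Rδ} {α' : R}
    (h : CR.e α' ≤ sSup (CR.e '' {x | ∃ β ∈ CR.Fset κ₂, F.mul x β ∈ CR.Iset O})) :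
    ∃ β ∈ CR.Fset κ₂, F.mul α' β ∈ CR.Iset O := by
  obtain ⟨s, hs, hmem⟩ := CR.closed_le_sSup (CR.isClosed_e α') h
  have hα : α' ≤ s.sup id := CR.e_le_e.1 hmem
  have hsup : ∃ β ∈ CR.Fset κ₂, F.mul (s.sup id) β ∈ CR.Iset O := by
    refine Finset.sup_induction (p := fun x => ∃ β ∈ CR.Fset κ₂, F.mul x β ∈ CR.Iset O) ?_ ?_ ?_
    · exact ⟨⊤, CR.top_mem_Fset _, by rw [F.mul_bot_left]; exact CR.bot_mem_Iset _⟩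
    · rintro x ⟨β₁, hβ₁, h1⟩ y ⟨β₂, hβ₂, h2⟩
      refine ⟨β₁ ⊓ β₂, CR.inf_mem_Fset hβ₁ hβ₂, ?_⟩
      have : F.mul (x ⊔ y) (β₁ ⊓ β₂) ≤ F.mul x β₁ ⊔ F.mul y β₂ := by
        rw [F.mul_sup_left]
        exact sup_le_sup (F.mul_mono le_rfl inf_le_left) (F.mul_mono le_rfl inf_le_right)
      exact CR.down_mem_Iset (CR.sup_mem_Iset h1 h2) this
    · exact fun i hi => hs hi
  obtain ⟨β, hβ, hmul⟩ := hsup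
  exact ⟨β, hβ, CR.down_mem_Iset hmul (F.mul_mono hα le_rfl)⟩

theorem mul_preimage_right {O : Rδ} {κ₁ : Rδ} {β' : R}
    (h : CR.e β' ≤ sSup (CR.e '' {x | ∃ α ∈ CR.Fset κ₁, F.mul α x ∈ CR.Iset O})) :
    ∃ α ∈ CR.Fset κ₁, F.mul α β' ∈ CR.Iset O := by
  obtain ⟨s, hs, hmem⟩ := CR.closed_le_sSup (CR.isClosed_e β') h
  have hβ : β' ≤ s.sup id := CR.e_le_e.1 hmem
  have hsup : ∃ α ∈ CR.Fset κ₁, F.mul α (s.sup id) ∈ CR.Iset O := by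
    refine Finset.sup_induction (p := fun x => ∃ α ∈ CR.Fset κ₁, F.mul α x ∈ CR.Iset O) ?_ ?_ ?_
    · exact ⟨⊤, CR.top_mem_Fset _, by rw [F.mul_bot_right]; exact CR.bot_mem_Iset _⟩
    · rintro x ⟨α₁, hα₁, h1⟩ y ⟨α₂, hα₂, h2⟩
      refine ⟨α₁ ⊓ α₂, CR.inf_mem_Fset hα₁ hα₂, ?_⟩
      have : F.mul (α₁ ⊓ α₂) (x ⊔ y) ≤ F.mul α₁ x ⊔ F.mul α₂ y := by
        rw [F.mul_sup_right]
        exact sup_le_sup (F.mul_mono inf_le_left le_rfl) (F.mul_mono inf_le_right le_rfl)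
      exact CR.down_mem_Iset (CR.sup_mem_Iset h1 h2) this
    · exact fun i hi => hs hi
  obtain ⟨α, hα, hmul⟩ := hsup
  exact ⟨α, hα, CR.down_mem_Iset hmul (F.mul_mono le_rfl hβ)⟩

theorem box_pre {o : Wδ} {c : Wδ} (s : Finset R)
    (hs : ↑s ⊆ {α | ∃ a ∈ CW.Iset o, c ≤ CW.e (F.box α a)}) :
    ∃ a ∈ CW.Iset o, c ≤ CW.e (F.box (s.sup id) a) := by
  refine Finset.sup_induction (p := fun x => ∃ a ∈ CW.Iset o, c ≤ CW.e (F.box x a)) ?_ ?_ ?_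
  · refine ⟨⊥, CW.bot_mem_Iset _, ?_⟩
    rw [F.box_bot, CW.map_top]; exact le_top
  · rintro x ⟨a₁, ha₁, h1⟩ y ⟨a₂, ha₂, h2⟩
    refine ⟨a₁ ⊔ a₂, CW.sup_mem_Iset ha₁ ha₂, ?_⟩
    rw [F.box_sup, CW.map_inf]
    exact le_inf (h1.trans (CW.e_mono (F.box_mono _ le_sup_left)))
      (h2.trans (CW.e_mono (F.box_mono _ le_sup_right)))
  · exact fun i hi => hs hi

theorem boxR_pre {ω : Rδ} {c : Wδ} (s : Finset R)
    (hs : ↑s ⊆ {α | ∃ β ∈ CR.Iset ω, c ≤ CW.e (F.boxR α β)}) :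
    ∃ β ∈ CR.Iset ω, c ≤ CW.e (F.boxR (s.sup id) β) := by
  refine Finset.sup_induction (p := fun x => ∃ β ∈ CR.Iset ω, c ≤ CW.e (F.boxR x β)) ?_ ?_ ?_
  · refine ⟨⊥, CR.bot_mem_Iset _, ?_⟩
    rw [F.boxR_bot, CW.map_top]; exact le_top
  · rintro x ⟨β₁, hβ₁, h1⟩ y ⟨β₂, hβ₂, h2⟩
    refine ⟨β₁ ⊔ β₂, CR.sup_mem_Iset hβ₁ hβ₂, ?_⟩
    rw [F.boxR_sup, CW.map_inf]
    exact le_inf (h1.trans (CW.e_mono (F.boxR_mono2 _ le_sup_left)))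
      (h2.trans (CW.e_mono (F.boxR_mono2 _ le_sup_right)))
  · exact fun i hi => hs hi

theorem boxR_pre2 {κ : Rδ} {c : Wδ} (s : Finset R)
    (hs : ↑s ⊆ {β | ∃ α ∈ CR.Fset κ, c ≤ CW.e (F.boxR α β)}) :
    ∃ α ∈ CR.Fset κ, c ≤ CW.e (F.boxR α (s.inf id)) := by
  refine Finset.inf_induction (p := fun x => ∃ α ∈ CR.Fset κ, c ≤ CW.e (F.boxR α x)) ?_ ?_ ?_
  · refine ⟨⊤, CR.top_mem_Fset _, ?_⟩
    rw [F.boxR_top, CW.map_top]; exact le_top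
  · rintro x ⟨α₁, hα₁, h1⟩ y ⟨α₂, hα₂, h2⟩
    refine ⟨α₁ ⊓ α₂, CR.inf_mem_Fset hα₁ hα₂, ?_⟩
    rw [F.boxR_inf, CW.map_inf]
    exact le_inf (h1.trans (CW.e_mono (F.boxR_anti inf_le_left x)))
      (h2.trans (CW.e_mono (F.boxR_anti inf_le_right y)))
  · exact fun i hi => hs hi

end OperatorLemmas

/-! ### The canonicity proofs for the individual axioms -/

section Conjuncts

open CanonicalExtension

variable {W R : Type*} [HeytingAlgebra W] [DistribLattice R] [BoundedOrder R]
  {Wδ Rδ : Type*} [CompletelyDistribLattice Wδ] [CompletelyDistribLattice Rδ]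
  (F : LRCAlgebra W R)
  (CW : CanonicalExtension W Wδ) (CR : CanonicalExtension R Rδ)

/-! #### Unit laws -/

theorem mulSigma_top (q : Rδ) : mulSigma F CR q ⊤ = q := by
  apply le_antisymm
  · refine mulSigma_le F CR fun κ₁ κ₂ h1 h2 hq _ => le_trans ?_ hq
    conv_rhs => rw [CR.closed_eq h1]
    refine le_sInf ?_
    rintro x ⟨α, hα, rfl⟩
    have h3 : mulSigmaKK F CR κ₁ κ₂ ≤ CR.e (F.mul α ⊤) :=
      iInf_le (fun p : {p : R × R // κ₁ ≤ CR.e p.1 ∧ κ₂ ≤ CR.e p.2} =>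
        CR.e (F.mul p.1.1 p.1.2)) ⟨(α, ⊤), hα, by rw [CR.map_top]; exact le_top⟩
    rwa [F.mul_top] at h3
  · refine CR.le_of_forall_closed fun κ hκ hκq => ?_
    refine le_trans ?_ (mKK_le_mulSigma F CR hκ CR.isClosed_top hκq le_top)
    refine le_iInf ?_
    rintro ⟨⟨α, β⟩, hα, hβ⟩
    have hβtop : β = ⊤ := top_le_iff.1 (CR.e_le_e.1 (by rw [CR.map_top]; exact hβ))
    show κ ≤ CR.e (F.mul α β)
    rw [hβtop, F.mul_top]
    exact hα

theorem top_mulSigma (q : Rδ) : mulSigma F CR ⊤ q = q := by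
  apply le_antisymm
  · refine mulSigma_le F CR fun κ₁ κ₂ h1 h2 _ hq => le_trans ?_ hq
    conv_rhs => rw [CR.closed_eq h2]
    refine le_sInf ?_
    rintro x ⟨β, hβ, rfl⟩
    have h3 : mulSigmaKK F CR κ₁ κ₂ ≤ CR.e (F.mul ⊤ β) :=
      iInf_le (fun p : {p : R × R // κ₁ ≤ CR.e p.1 ∧ κ₂ ≤ CR.e p.2} =>
        CR.e (F.mul p.1.1 p.1.2)) ⟨(⊤, β), by rw [CR.map_top]; exact le_top, hβ⟩
    rwa [F.top_mul] at h3
  · refine CR.le_of_forall_closed fun κ hκ hκq => ?_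
    refine le_trans ?_ (mKK_le_mulSigma F CR CR.isClosed_top hκ le_top hκq)
    refine le_iInf ?_
    rintro ⟨⟨α, β⟩, hα, hβ⟩
    have hαtop : α = ⊤ := top_le_iff.1 (CR.e_le_e.1 (by rw [CR.map_top]; exact hα))
    show κ ≤ CR.e (F.mul α β)
    rw [hαtop, F.top_mul]
    exact hβ

/-! #### Complete join preservation of the diamonds -/

theorem diaSigma_sSup (S : Set Wδ) :
    diaSigma F CW (sSup S) = ⨆ u ∈ S, diaSigma F CW u := by
  apply le_antisymm
  · refine diaSigma_le F CW fun k hk hks => ?_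
    refine CW.le_of_forall_open fun O hO hYO => ?_
    have hstar : ∀ u ∈ S, u ≤ sSup (CW.e '' {x | F.dia x ∈ CW.Iset O}) := by
      intro u hu
      refine CW.le_of_forall_closed fun k' hk' hk'u => ?_
      have hdk : dK F CW k' ≤ O :=
        (dK_le_diaSigma F CW hk' hk'u).trans ((le_iSup₂ u hu).trans hYO)
      obtain ⟨s, hs, hmem⟩ := CW.sInf_le_open hO hdk
      obtain ⟨b, hb, hbs⟩ := exists_dia_lb F CW s hs
      exact le_trans (CW.mem_Fset.1 hb) (le_sSup ⟨b, CW.down_mem_Iset hmem hbs, rfl⟩)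
    have hk2 : k ≤ sSup (CW.e '' {x | F.dia x ∈ CW.Iset O}) := hks.trans (sSup_le hstar)
    obtain ⟨a, hka, hao⟩ := CW.compact_sep hk (CW.isOpen_sSup _) hk2
    show sInf (CW.e '' (F.dia '' CW.Fset k)) ≤ O
    refine le_trans (sInf_le ?_) (dia_preimage F CW hao)
    exact ⟨F.dia a, ⟨a, hka, rfl⟩, rfl⟩
  · refine iSup₂_le fun u hu => diaSigma_le F CW fun k hk hku =>
      dK_le_diaSigma F CW hk (hku.trans (le_sSup hu))

theorem diaRSigma_sSup (S : Set Rδ) :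
    diaRSigma F CW CR (sSup S) = ⨆ q ∈ S, diaRSigma F CW CR q := by
  apply le_antisymm
  · refine diaRSigma_le F CW CR fun κ hκ hκs => ?_
    refine CW.le_of_forall_open fun O hO hYO => ?_
    have hstar : ∀ q ∈ S, q ≤ sSup (CR.e '' {x | F.diaR x ∈ CW.Iset O}) := by
      intro q hq
      refine CR.le_of_forall_closed fun κ' hκ' hκ'q => ?_
      have hdk : dKR F CW CR κ' ≤ O :=
        (dKR_le_diaRSigma F CW CR hκ' hκ'q).trans ((le_iSup₂ q hq).trans hYO)
      obtain ⟨s, hs, hmem⟩ := CW.sInf_le_open hO hdk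
      obtain ⟨β, hβ, hβs⟩ := exists_diaR_lb F CR s hs
      exact le_trans (CR.mem_Fset.1 hβ) (le_sSup ⟨β, CW.down_mem_Iset hmem hβs, rfl⟩)
    have hk2 : κ ≤ sSup (CR.e '' {x | F.diaR x ∈ CW.Iset O}) := hκs.trans (sSup_le hstar)
    obtain ⟨β, hκβ, hβo⟩ := CR.compact_sep hκ (CR.isOpen_sSup _) hk2
    show sInf (CW.e '' (F.diaR '' CR.Fset κ)) ≤ O
    refine le_trans (sInf_le ?_) (diaR_preimage F CW CR hβo)
    exact ⟨F.diaR β, ⟨β, hκβ, rfl⟩, rfl⟩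
  · refine iSup₂_le fun q hq => diaRSigma_le F CW CR fun κ hκ hκq =>
      dKR_le_diaRSigma F CW CR hκ (hκq.trans (le_sSup hq))

/-! #### Complete join preservation of the product -/

theorem mulSigma_sSup_left (S : Set Rδ) (w : Rδ) :
    mulSigma F CR (sSup S) w = ⨆ q ∈ S, mulSigma F CR q w := by
  apply le_antisymm
  · refine mulSigma_le F CR fun κ₁ κ₂ h1 h2 hq hw => ?_
    refine CR.le_of_forall_open fun O hO hYO => ?_
    have hstar : ∀ q ∈ S,
        q ≤ sSup (CR.e '' {x | ∃ β ∈ CR.Fset κ₂, F.mul x β ∈ CR.Iset O}) := by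
      intro q hqS
      refine CR.le_of_forall_closed fun κ hκ hκq => ?_
      have hm : mulSigmaKK F CR κ κ₂ ≤ O :=
        (mKK_le_mulSigma F CR hκ h2 hκq hw).trans ((le_iSup₂ q hqS).trans hYO)
      rw [mulSigmaKK_eq] at hm
      obtain ⟨s, hs, hmem⟩ := CR.sInf_le_open hO hm
      obtain ⟨α, hα, β, hβ, hle⟩ := exists_mul_lb F CR s hs
      exact le_trans (CR.mem_Fset.1 hα) (le_sSup ⟨α, ⟨β, hβ, CR.down_mem_Iset hmem hle⟩, rfl⟩)
    have hk2 := hq.trans (sSup_le hstar)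
    obtain ⟨α', hκα', hα'o⟩ := CR.compact_sep h1 (CR.isOpen_sSup _) hk2
    obtain ⟨β, hβ, hmul⟩ := mul_preimage_left F CR hα'o
    exact (iInf_le (fun p : {p : R × R // κ₁ ≤ CR.e p.1 ∧ κ₂ ≤ CR.e p.2} =>
      CR.e (F.mul p.1.1 p.1.2)) ⟨(α', β), hκα', hβ⟩).trans hmul
  · refine iSup₂_le fun q hq => mulSigma_le F CR fun κ₁ κ₂ h1 h2 hq' hw =>
      mKK_le_mulSigma F CR h1 h2 (hq'.trans (le_sSup hq)) hw

theorem mulSigma_sSup_right (q : Rδ) (S : Set Rδ) :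
    mulSigma F CR q (sSup S) = ⨆ w ∈ S, mulSigma F CR q w := by
  apply le_antisymm
  · refine mulSigma_le F CR fun κ₁ κ₂ h1 h2 hq hw => ?_
    refine CR.le_of_forall_open fun O hO hYO => ?_
    have hstar : ∀ w ∈ S,
        w ≤ sSup (CR.e '' {x | ∃ α ∈ CR.Fset κ₁, F.mul α x ∈ CR.Iset O}) := by
      intro w hwS
      refine CR.le_of_forall_closed fun κ hκ hκw => ?_
      have hm : mulSigmaKK F CR κ₁ κ ≤ O :=
        (mKK_le_mulSigma F CR h1 hκ hq hκw).trans ((le_iSup₂ w hwS).trans hYO)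
      rw [mulSigmaKK_eq] at hm
      obtain ⟨s, hs, hmem⟩ := CR.sInf_le_open hO hm
      obtain ⟨α, hα, β, hβ, hle⟩ := exists_mul_lb F CR s hs
      exact le_trans (CR.mem_Fset.1 hβ) (le_sSup ⟨β, ⟨α, hα, CR.down_mem_Iset hmem hle⟩, rfl⟩)
    have hk2 := hw.trans (sSup_le hstar)
    obtain ⟨β', hκβ', hβ'o⟩ := CR.compact_sep h2 (CR.isOpen_sSup _) hk2
    obtain ⟨α, hα, hmul⟩ := mul_preimage_right F CR hβ'o
    exact (iInf_le (fun p : {p : R × R // κ₁ ≤ CR.e p.1 ∧ κ₂ ≤ CR.e p.2} =>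
      CR.e (F.mul p.1.1 p.1.2)) ⟨(α, β'), hα, hκβ'⟩).trans hmul
  · refine iSup₂_le fun w hw => mulSigma_le F CR fun κ₁ κ₂ h1 h2 hq hw' =>
      mKK_le_mulSigma F CR h1 h2 hq (hw'.trans (le_sSup hw))

/-! #### The boxes -/

theorem boxPi_sSup (S : Set Rδ) (u : Wδ) :
    boxPi F CW CR (sSup S) u = ⨅ q ∈ S, boxPi F CW CR q u := by
  apply le_antisymm
  · refine le_iInf₂ fun q hq => le_boxPi F CW CR fun κ o ho huo hκ hκq =>
      boxPi_le_KO F CW CR ho huo hκ (hκq.trans (le_sSup hq))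
  · refine le_boxPi F CW CR fun κ o ho huo hκ hκS => ?_
    refine CW.le_of_forall_closed fun c hc hcX => ?_
    have hstar : ∀ q ∈ S,
        q ≤ sSup (CR.e '' {α | ∃ a ∈ CW.Iset o, c ≤ CW.e (F.box α a)}) := by
      intro q hqS
      refine CR.le_of_forall_closed fun κ' hκ' hκ'q => ?_
      have h1 : c ≤ boxPiKO F CW CR κ' o :=
        hcX.trans ((iInf₂_le q hqS).trans (boxPi_le_KO F CW CR ho huo hκ' hκ'q))
      rw [boxPiKO_eq] at h1
      obtain ⟨s, hs, hmem⟩ := CW.closed_le_sSup hc h1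
      obtain ⟨α, hα, a, ha, hle⟩ := exists_box_ub F CW CR s hs
      exact hα.trans (le_sSup ⟨α, ⟨a, ha, hmem.trans (CW.e_mono hle)⟩, rfl⟩)
    have hκZ : κ ≤ _ := hκS.trans (sSup_le hstar)
    obtain ⟨s, hs, hmem⟩ := CR.closed_le_sSup hκ hκZ
    obtain ⟨a, ha, hca⟩ := box_pre F CW s hs
    rw [boxPiKO_eq]
    exact hca.trans (le_sSup ⟨F.box (s.sup id) a, ⟨s.sup id, hmem, a, ha, rfl⟩, rfl⟩)

theorem boxPi_mono2 (q : Rδ) : Monotone (boxPi F CW CR q) := fun u v huv =>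
  le_boxPi F CW CR fun κ o ho hvo hκ hκq =>
    boxPi_le_KO F CW CR ho (huv.trans hvo) hκ hκq

theorem boxRPi_sSup (S : Set Rδ) (w : Rδ) :
    boxRPi F CW CR (sSup S) w = ⨅ q ∈ S, boxRPi F CW CR q w := by
  apply le_antisymm
  · refine le_iInf₂ fun q hq => le_boxRPi F CW CR fun κ ω hω hwω hκ hκq =>
      boxRPi_le_KO F CW CR hω hwω hκ (hκq.trans (le_sSup hq))
  · refine le_boxRPi F CW CR fun κ ω hω hwω hκ hκS => ?_
    refine CW.le_of_forall_closed fun c hc hcX => ?_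
    have hstar : ∀ q ∈ S,
        q ≤ sSup (CR.e '' {α | ∃ β ∈ CR.Iset ω, c ≤ CW.e (F.boxR α β)}) := by
      intro q hqS
      refine CR.le_of_forall_closed fun κ' hκ' hκ'q => ?_
      have h1 : c ≤ boxRPiKO F CW CR κ' ω :=
        hcX.trans ((iInf₂_le q hqS).trans (boxRPi_le_KO F CW CR hω hwω hκ' hκ'q))
      rw [boxRPiKO_eq] at h1
      obtain ⟨s, hs, hmem⟩ := CW.closed_le_sSup hc h1
      obtain ⟨α, hα, β, hβ, hle⟩ := exists_boxR_ub F CR s hs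
      exact hα.trans (le_sSup ⟨α, ⟨β, hβ, hmem.trans (CW.e_mono hle)⟩, rfl⟩)
    have hκZ : κ ≤ _ := hκS.trans (sSup_le hstar)
    obtain ⟨s, hs, hmem⟩ := CR.closed_le_sSup hκ hκZ
    obtain ⟨β, hβ, hcβ⟩ := boxR_pre F CW CR s hs
    rw [boxRPiKO_eq]
    exact hcβ.trans (le_sSup ⟨F.boxR (s.sup id) β, ⟨s.sup id, hmem, β, hβ, rfl⟩, rfl⟩)

theorem boxRPi_sInf (q : Rδ) (S : Set Rδ) :
    boxRPi F CW CR q (sInf S) = ⨅ w ∈ S, boxRPi F CW CR q w := by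
  apply le_antisymm
  · refine le_iInf₂ fun w hw => le_boxRPi F CW CR fun κ ω hω hwω hκ hκq =>
      boxRPi_le_KO F CW CR hω ((sInf_le hw).trans hwω) hκ hκq
  · refine le_boxRPi F CW CR fun κ ω hω hSω hκ hκq => ?_
    refine CW.le_of_forall_closed fun c hc hcX => ?_
    have hstar : ∀ w ∈ S,
        sInf (CR.e '' {β | ∃ α ∈ CR.Fset κ, c ≤ CW.e (F.boxR α β)}) ≤ w := by
      intro w hw
      refine CR.le_of_forall_open fun ω' hω' hwω' => ?_
      have h1 : c ≤ boxRPiKO F CW CR κ ω' :=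
        hcX.trans ((iInf₂_le w hw).trans (boxRPi_le_KO F CW CR hω' hwω' hκ hκq))
      rw [boxRPiKO_eq] at h1
      obtain ⟨s, hs, hmem⟩ := CW.closed_le_sSup hc h1
      obtain ⟨α, hα, β, hβ, hle⟩ := exists_boxR_ub F CR s hs
      refine le_trans (sInf_le ?_) (CR.mem_Iset.1 hβ)
      exact ⟨β, ⟨α, hα, hmem.trans (CW.e_mono hle)⟩, rfl⟩
    have h2 : sInf (CR.e '' {β | ∃ α ∈ CR.Fset κ, c ≤ CW.e (F.boxR α β)}) ≤ ω :=
      (le_sInf hstar).trans hSω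
    obtain ⟨s, hs, hmem⟩ := CR.sInf_le_open hω h2
    obtain ⟨α, hα, hcα⟩ := boxR_pre2 F CW CR s hs
    rw [boxRPiKO_eq]
    exact hcα.trans (le_sSup ⟨F.boxR α (s.inf id), ⟨α, hα, s.inf id, hmem, rfl⟩, rfl⟩)

/-! #### B3, BD1, BD2 -/

theorem b3_ext (q w : Rδ) (u : Wδ) :
    boxPi F CW CR q (boxPi F CW CR w u) ≤ boxPi F CW CR (mulSigma F CR q w) u := by
  refine le_boxPi F CW CR fun κ o ho huo hκ hκM => ?_
  refine CW.le_of_forall_closed fun c hc hcL => ?_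
  have hstar : mulSigma F CR q w
      ≤ sSup (CR.e '' {ξ | ∃ a ∈ CW.Iset o, c ≤ CW.e (F.box ξ a)}) := by
    refine mulSigma_le F CR fun κ₁ κ₂ h1 h2 hq hw => ?_
    have hopen2 : CW.IsOpen (boxPiKO F CW CR κ₂ o) := by
      rw [boxPiKO_eq]; exact CW.isOpen_sSup _
    have hc1 : c ≤ boxPiKO F CW CR κ₁ (boxPiKO F CW CR κ₂ o) :=
      hcL.trans (boxPi_le_KO F CW CR hopen2 (boxPi_le_KO F CW CR ho huo h2 hw) h1 hq)
    rw [boxPiKO_eq] at hc1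
    obtain ⟨s, hs, hmem⟩ := CW.closed_le_sSup hc hc1
    obtain ⟨α, hα, b, hb, hble⟩ := exists_box_ub F CW CR s hs
    have hb2 : CW.e b ≤ sSup (CW.e '' boxSet F CW CR κ₂ o) := by
      rw [← boxPiKO_eq]; exact hb
    obtain ⟨s₂, hs₂, hmem₂⟩ := CW.closed_le_sSup (CW.isClosed_e b) hb2
    obtain ⟨β, hβ, a, ha, hble₂⟩ := exists_box_ub F CW CR s₂ hs₂
    have hb3 : b ≤ F.box β a := (CW.e_le_e.1 hmem₂).trans hble₂
    have hcbox : c ≤ CW.e (F.box (F.mul α β) a) :=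
      (hmem.trans (CW.e_mono hble)).trans
        (CW.e_mono ((F.box_mono α hb3).trans (F.b3 α β a)))
    exact (iInf_le (fun p : {p : R × R // κ₁ ≤ CR.e p.1 ∧ κ₂ ≤ CR.e p.2} =>
      CR.e (F.mul p.1.1 p.1.2)) ⟨(α, β), hα, hβ⟩).trans
      (le_sSup ⟨F.mul α β, ⟨a, ha, hcbox⟩, rfl⟩)
  obtain ⟨s, hs, hmem⟩ := CR.closed_le_sSup hκ (hκM.trans hstar)
  obtain ⟨a, ha, hca⟩ := box_pre F CW s hs
  rw [boxPiKO_eq]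
  exact hca.trans (le_sSup ⟨F.box (s.sup id) a, ⟨s.sup id, hmem, a, ha, rfl⟩, rfl⟩)

theorem bd1_ext (q : Rδ) (u : Wδ) :
    diaRSigma F CW CR q ⊓ boxPi F CW CR q u ≤ diaSigma F CW u := by
  rw [diaRSigma_eq, iSup_inf_eq]
  refine iSup_le ?_
  rintro ⟨κ, hκ, hκq⟩
  refine CW.le_of_forall_closed fun c hc hcL => ?_
  refine CW.le_of_forall_open fun O hO hDO => ?_
  have hcd : c ≤ dKR F CW CR κ := hcL.trans inf_le_left
  have hcB : c ≤ boxPi F CW CR q u := hcL.trans inf_le_right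
  have hustar : u ≤ sSup (CW.e '' {x | F.dia x ∈ CW.Iset O}) := by
    refine CW.le_of_forall_closed fun k hk hku => ?_
    have hdk : dK F CW k ≤ O := (dK_le_diaSigma F CW hk hku).trans hDO
    obtain ⟨s, hs, hmem⟩ := CW.sInf_le_open hO hdk
    obtain ⟨b, hb, hbs⟩ := exists_dia_lb F CW s hs
    exact le_trans (CW.mem_Fset.1 hb) (le_sSup ⟨b, CW.down_mem_Iset hmem hbs, rfl⟩)
  have h1 : c ≤ boxPiKO F CW CR κ (sSup (CW.e '' {x | F.dia x ∈ CW.Iset O})) :=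
    hcB.trans (boxPi_le_KO F CW CR (CW.isOpen_sSup _) hustar hκ hκq)
  rw [boxPiKO_eq] at h1
  obtain ⟨s, hs, hmem⟩ := CW.closed_le_sSup hc h1
  obtain ⟨α, hα, a, ha, hle⟩ := exists_box_ub F CW CR s hs
  have hdia : F.dia a ∈ CW.Iset O := dia_preimage F CW ha
  have hcda : c ≤ CW.e (F.diaR α) := hcd.trans (sInf_le ⟨F.diaR α, ⟨α, hα, rfl⟩, rfl⟩)
  have hcba : c ≤ CW.e (F.box α a) := hmem.trans (CW.e_mono hle)
  have hfin : c ≤ CW.e (F.dia a) := by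
    have h2 := le_inf hcda hcba
    rw [← CW.map_inf] at h2
    exact h2.trans (CW.e_mono (F.bd1 α a))
  exact hfin.trans hdia

theorem bd2_ext (q w : Rδ) :
    boxRPi F CW CR q w ≤ boxPi F CW CR q (diaRSigma F CW CR w) := by
  refine le_boxPi F CW CR fun κ o ho hDo hκ hκq => ?_
  refine CW.le_of_forall_closed fun c hc hcL => ?_
  have hwstar : w ≤ sSup (CR.e '' {β | F.diaR β ∈ CW.Iset o}) := by
    refine CR.le_of_forall_closed fun κ₂ hκ₂ hκ₂w => ?_
    have h1 : dKR F CW CR κ₂ ≤ o := (dKR_le_diaRSigma F CW CR hκ₂ hκ₂w).trans hDo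
    obtain ⟨s, hs, hmem⟩ := CW.sInf_le_open ho h1
    obtain ⟨β, hβ, hβs⟩ := exists_diaR_lb F CR s hs
    exact le_trans (CR.mem_Fset.1 hβ) (le_sSup ⟨β, CW.down_mem_Iset hmem hβs, rfl⟩)
  have h2 : c ≤ boxRPiKO F CW CR κ (sSup (CR.e '' {β | F.diaR β ∈ CW.Iset o})) :=
    hcL.trans (boxRPi_le_KO F CW CR (CR.isOpen_sSup _) hwstar hκ hκq)
  rw [boxRPiKO_eq] at h2
  obtain ⟨s, hs, hmem⟩ := CW.closed_le_sSup hc h2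
  obtain ⟨α, hα, β, hβ, hle⟩ := exists_boxR_ub F CR s hs
  have hdiaR : F.diaR β ∈ CW.Iset o := diaR_preimage F CW CR hβ
  have hcb : c ≤ CW.e (F.box α (F.diaR β)) :=
    (hmem.trans (CW.e_mono hle)).trans (CW.e_mono (F.bd2 α β))
  rw [boxPiKO_eq]
  exact hcb.trans (le_sSup ⟨F.box α (F.diaR β), ⟨α, hα, F.diaR β, hdiaR, rfl⟩, rfl⟩)

/-! #### Associativity -/

theorem mulSigma_iSup_left {ι : Sort*} (f : ι → Rδ) (w : Rδ) :
    mulSigma F CR (⨆ i, f i) w = ⨆ i, mulSigma F CR (f i) w := by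
  rw [← sSup_range, mulSigma_sSup_left, iSup_range]

theorem mulSigma_iSup_right {ι : Sort*} (q : Rδ) (f : ι → Rδ) :
    mulSigma F CR q (⨆ i, f i) = ⨆ i, mulSigma F CR q (f i) := by
  rw [← sSup_range, mulSigma_sSup_right, iSup_range]

theorem mulSigma_closed_left {c : Rδ} (hc : CR.IsClosed c) (w : Rδ) :
    mulSigma F CR c w
      = ⨆ κ₂ : {κ₂ : Rδ // CR.IsClosed κ₂ ∧ κ₂ ≤ w}, mulSigmaKK F CR c κ₂.1 := by
  apply le_antisymm
  · refine mulSigma_le F CR fun κ₁ κ₂ h1 h2 hq hw => ?_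
    exact le_iSup_of_le ⟨κ₂, h2, hw⟩ (mulSigmaKK_anti F CR hq le_rfl)
  · refine iSup_le ?_
    rintro ⟨κ₂, h2, hw⟩
    exact mKK_le_mulSigma F CR hc h2 le_rfl hw

theorem mulSigma_closed_right {c : Rδ} (hc : CR.IsClosed c) (q : Rδ) :
    mulSigma F CR q c
      = ⨆ κ₁ : {κ₁ : Rδ // CR.IsClosed κ₁ ∧ κ₁ ≤ q}, mulSigmaKK F CR κ₁.1 c := by
  apply le_antisymm
  · refine mulSigma_le F CR fun κ₁ κ₂ h1 h2 hq hw => ?_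
    exact le_iSup_of_le ⟨κ₁, h1, hq⟩ (mulSigmaKK_anti F CR le_rfl hw)
  · refine iSup_le ?_
    rintro ⟨κ₁, h1, hq⟩
    exact mKK_le_mulSigma F CR h1 hc hq le_rfl

theorem mKK_assoc {κ₁ κ₂ κ₃ : Rδ} :
    mulSigmaKK F CR (mulSigmaKK F CR κ₁ κ₂) κ₃
      = mulSigmaKK F CR κ₁ (mulSigmaKK F CR κ₂ κ₃) := by
  have hL : mulSigmaKK F CR (mulSigmaKK F CR κ₁ κ₂) κ₃
      = sInf (CR.e '' {x | ∃ α ∈ CR.Fset κ₁, ∃ β ∈ CR.Fset κ₂, ∃ γ ∈ CR.Fset κ₃,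
          x = F.mul (F.mul α β) γ}) := by
    apply le_antisymm
    · refine le_sInf ?_
      rintro x ⟨y, ⟨α, hα, β, hβ, γ, hγ, rfl⟩, rfl⟩
      have hsub : mulSigmaKK F CR κ₁ κ₂ ≤ CR.e (F.mul α β) :=
        iInf_le (fun p : {p : R × R // κ₁ ≤ CR.e p.1 ∧ κ₂ ≤ CR.e p.2} =>
          CR.e (F.mul p.1.1 p.1.2)) ⟨(α, β), hα, hβ⟩
      exact iInf_le (fun p : {p : R × R // mulSigmaKK F CR κ₁ κ₂ ≤ CR.e p.1 ∧ κ₃ ≤ CR.e p.2} =>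
        CR.e (F.mul p.1.1 p.1.2)) ⟨(F.mul α β, γ), hsub, hγ⟩
    · refine le_iInf ?_
      rintro ⟨⟨ξ, γ⟩, hξ, hγ⟩
      have hξ' : sInf (CR.e '' mulSet F CR κ₁ κ₂) ≤ CR.e ξ := by
        rw [← mulSigmaKK_eq]; exact hξ
      obtain ⟨s, hs, hmem⟩ := CR.sInf_le_open (CR.isOpen_e ξ) hξ'
      obtain ⟨α, hα, β, hβ, hαβ⟩ := exists_mul_lb F CR s hs
      have hαβξ : F.mul α β ≤ ξ := hαβ.trans (CR.e_le_e.1 hmem)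
      refine le_trans (sInf_le ?_) (CR.e_mono (F.mul_mono hαβξ le_rfl))
      exact ⟨F.mul (F.mul α β) γ, ⟨α, hα, β, hβ, γ, hγ, rfl⟩, rfl⟩
  have hR : mulSigmaKK F CR κ₁ (mulSigmaKK F CR κ₂ κ₃)
      = sInf (CR.e '' {x | ∃ α ∈ CR.Fset κ₁, ∃ β ∈ CR.Fset κ₂, ∃ γ ∈ CR.Fset κ₃,
          x = F.mul α (F.mul β γ)}) := by
    apply le_antisymm
    · refine le_sInf ?_
      rintro x ⟨y, ⟨α, hα, β, hβ, γ, hγ, rfl⟩, rfl⟩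
      have hsub : mulSigmaKK F CR κ₂ κ₃ ≤ CR.e (F.mul β γ) :=
        iInf_le (fun p : {p : R × R // κ₂ ≤ CR.e p.1 ∧ κ₃ ≤ CR.e p.2} =>
          CR.e (F.mul p.1.1 p.1.2)) ⟨(β, γ), hβ, hγ⟩
      exact iInf_le (fun p : {p : R × R // κ₁ ≤ CR.e p.1 ∧ mulSigmaKK F CR κ₂ κ₃ ≤ CR.e p.2} =>
        CR.e (F.mul p.1.1 p.1.2)) ⟨(α, F.mul β γ), hα, hsub⟩
    · refine le_iInf ?_
      rintro ⟨⟨α, ξ⟩, hα, hξ⟩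
      have hξ' : sInf (CR.e '' mulSet F CR κ₂ κ₃) ≤ CR.e ξ := by
        rw [← mulSigmaKK_eq]; exact hξ
      obtain ⟨s, hs, hmem⟩ := CR.sInf_le_open (CR.isOpen_e ξ) hξ'
      obtain ⟨β, hβ, γ, hγ, hβγ⟩ := exists_mul_lb F CR s hs
      have hβγξ : F.mul β γ ≤ ξ := hβγ.trans (CR.e_le_e.1 hmem)
      refine le_trans (sInf_le ?_) (CR.e_mono (F.mul_mono le_rfl hβγξ))
      exact ⟨F.mul α (F.mul β γ), ⟨α, hα, β, hβ, γ, hγ, rfl⟩, rfl⟩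
  have hset : {x | ∃ α ∈ CR.Fset κ₁, ∃ β ∈ CR.Fset κ₂, ∃ γ ∈ CR.Fset κ₃,
        x = F.mul (F.mul α β) γ}
      = {x | ∃ α ∈ CR.Fset κ₁, ∃ β ∈ CR.Fset κ₂, ∃ γ ∈ CR.Fset κ₃,
        x = F.mul α (F.mul β γ)} := by
    ext x
    constructor <;> rintro ⟨α, hα, β, hβ, γ, hγ, rfl⟩
    · exact ⟨α, hα, β, hβ, γ, hγ, F.mul_assoc α β γ⟩
    · exact ⟨α, hα, β, hβ, γ, hγ, (F.mul_assoc α β γ).symm⟩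
  rw [hL, hR, hset]

theorem mulSigma_assoc (q w r : Rδ) :
    mulSigma F CR (mulSigma F CR q w) r = mulSigma F CR q (mulSigma F CR w r) := by
  have h0 : mulSigma F CR q w
      = ⨆ p : {p : Rδ × Rδ // CR.IsClosed p.1 ∧ CR.IsClosed p.2 ∧ p.1 ≤ q ∧ p.2 ≤ w},
          mulSigmaKK F CR p.1.1 p.1.2 := rfl
  have h0' : mulSigma F CR w r
      = ⨆ p : {p : Rδ × Rδ // CR.IsClosed p.1 ∧ CR.IsClosed p.2 ∧ p.1 ≤ w ∧ p.2 ≤ r},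
          mulSigmaKK F CR p.1.1 p.1.2 := rfl
  rw [h0, mulSigma_iSup_left, h0', mulSigma_iSup_right]
  apply le_antisymm
  · refine iSup_le ?_
    rintro ⟨⟨κ₁, κ₂⟩, h1, h2, hq, hw⟩
    rw [mulSigma_closed_left F CR (isClosed_mulSigmaKK F CR κ₁ κ₂) r]
    refine iSup_le ?_
    rintro ⟨κ₃, h3, hr⟩
    refine le_iSup_of_le ⟨(κ₂, κ₃), h2, h3, hw, hr⟩ ?_
    rw [mulSigma_closed_right F CR (isClosed_mulSigmaKK F CR κ₂ κ₃) q]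
    exact le_iSup_of_le ⟨κ₁, h1, hq⟩ (le_of_eq (mKK_assoc F CR))
  · refine iSup_le ?_
    rintro ⟨⟨κ₂, κ₃⟩, h2, h3, hw, hr⟩
    rw [mulSigma_closed_right F CR (isClosed_mulSigmaKK F CR κ₂ κ₃) q]
    refine iSup_le ?_
    rintro ⟨κ₁, h1, hq⟩
    refine le_iSup_of_le ⟨(κ₁, κ₂), h1, h2, hq, hw⟩ ?_
    rw [mulSigma_closed_left F CR (isClosed_mulSigmaKK F CR κ₁ κ₂) r]
    exact le_iSup_of_le ⟨κ₃, h3, hr⟩ (le_of_eq (mKK_assoc F CR).symm)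

end Conjuncts
/-! ## Statement 2: canonicity of LRC -/

/-- **Canonicity of LRC**: for any heterogeneous LRC-algebra
`F = (W, R, ▷, ◇, ▷', ◇')` and canonical extensions `Wδ` of `W` and `Rδ` of
`R`, the structure `Fδ = (Wδ, Rδ, ▷^π, ◇^σ, ▷'^π, ◇'^σ)` is a perfect
heterogeneous LRC-algebra: `Wδ` and `Rδ` are perfect (they are complete and
completely distributive, and completely join-generated by their completely
join-irreducible elements), all the defining axioms of heterogeneous
LRC-algebras (including B3, BD1 and BD2) remain valid for the extended
operations, and the extended operations satisfy the infinitary versions of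
the join- and meet-preservation properties. -/
theorem lrc_canonicity
    {W R : Type*} [HeytingAlgebra W] [DistribLattice R] [BoundedOrder R]
    {Wδ Rδ : Type*} [CompletelyDistribLattice Wδ] [CompletelyDistribLattice Rδ]
    (F : LRCAlgebra W R)
    (CW : CanonicalExtension W Wδ) (CR : CanonicalExtension R Rδ) :
    -- the lattices `Wδ` and `Rδ` are perfect
    JoinGeneratedByCJIrred Wδ ∧ JoinGeneratedByCJIrred Rδ ∧
    -- `·^σ` is associative with unit `1 = ⊤` and is completely
    -- join-preserving in each coordinate (R1-R4 for the extension)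
    (∀ q w r : Rδ, mulSigma F CR (mulSigma F CR q w) r
        = mulSigma F CR q (mulSigma F CR w r)) ∧
    (∀ q : Rδ, mulSigma F CR q ⊤ = q) ∧
    (∀ q : Rδ, mulSigma F CR ⊤ q = q) ∧
    (∀ (S : Set Rδ) (w : Rδ), mulSigma F CR (sSup S) w
        = ⨆ q ∈ S, mulSigma F CR q w) ∧
    (∀ (q : Rδ) (S : Set Rδ), mulSigma F CR q (sSup S)
        = ⨆ w ∈ S, mulSigma F CR q w) ∧
    -- `◇^σ` and `◇'^σ` are completely join-preserving
    -- (infinitary D1-D4)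
    (∀ S : Set Wδ, diaSigma F CW (sSup S) = ⨆ u ∈ S, diaSigma F CW u) ∧
    (∀ S : Set Rδ, diaRSigma F CW CR (sSup S) = ⨆ q ∈ S, diaRSigma F CW CR q) ∧
    -- `▷^π` turns arbitrary joins in its first coordinate into meets and is
    -- monotone in its second coordinate (infinitary B1, B2)
    (∀ (S : Set Rδ) (u : Wδ), boxPi F CW CR (sSup S) u
        = ⨅ q ∈ S, boxPi F CW CR q u) ∧
    (∀ q : Rδ, Monotone (boxPi F CW CR q)) ∧
    -- `▷'^π` turns arbitrary joins in its first coordinate into meets and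
    -- preserves arbitrary meets in its second coordinate
    -- (infinitary B4, B5, B6, B7)
    (∀ (S : Set Rδ) (w : Rδ), boxRPi F CW CR (sSup S) w
        = ⨅ q ∈ S, boxRPi F CW CR q w) ∧
    (∀ (q : Rδ) (S : Set Rδ), boxRPi F CW CR q (sInf S)
        = ⨅ w ∈ S, boxRPi F CW CR q w) ∧
    -- axioms B3, BD1 and BD2 remain valid
    (∀ (q w : Rδ) (u : Wδ), boxPi F CW CR q (boxPi F CW CR w u)
        ≤ boxPi F CW CR (mulSigma F CR q w) u) ∧
    (∀ (q : Rδ) (u : Wδ),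
        diaRSigma F CW CR q ⊓ boxPi F CW CR q u ≤ diaSigma F CW u) ∧
    (∀ q w : Rδ, boxRPi F CW CR q w ≤ boxPi F CW CR q (diaRSigma F CW CR w)) := by
  exact ⟨CW.joinGenerated, CR.joinGenerated, mulSigma_assoc F CR, mulSigma_top F CR,
    top_mulSigma F CR, mulSigma_sSup_left F CR, mulSigma_sSup_right F CR,
    diaSigma_sSup F CW, diaRSigma_sSup F CW CR, boxPi_sSup F CW CR, boxPi_mono2 F CW CR,
    boxRPi_sSup F CW CR, boxRPi_sInf F CW CR, b3_ext F CW CR, bd1_ext F CW CR,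
    bd2_ext F CW CR⟩
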